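/- Let A ≥ 1 and K ≥ 1 be integers, η > 0, C > 0 with η ≤ 1/(270·C). Let ψ(x) := (1/η) Σ_a log(1/x(a)) and D_ψ(x,x') := (1/η) Σ_a [ log(x'(a)/x(a)) + x(a)/x'(a) − 1 ] on vectors with positive coordinates, and let Δ_A⁺ be the set of probability vectors in ℝ^A with all coordinates positive. Let π_1 = π_1' be the uniform vector (1/A,…,1/A), let β̂_0 = 0, and let β̂_1,…,β̂_K ∈ ℝ^A be nonnegative vectors with Σ_a π_k(a) β̂_k(a) ≤ C for each k. Suppose for each k = 1,…,K: π_{k+1}' ∈ Δ_A⁺ minimizes ⟨π, −β̂_k⟩ + D_ψ(π, π_k') over Δ_A⁺, and π_{k+1} ∈ Δ_A⁺ minimizes ⟨π, −β̂_k⟩ + D_ψ(π, π_{k+1}') over Δ_A⁺. Then for every k ∈ {1,…,K} and every coordinate a, |π_{k+1}(a) − π_k(a)| ≤ 120 η C · π_k(a). -/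

import Mathlib

open Finset

private lemma oomd_sum_pert {A : ℕ} (i j : Fin A) (w : Fin A → ℝ) :
    ∑ a, ((if a = i then (1:ℝ) else 0) - (if a = j then 1 else 0)) * w a = w i - w j := by
  simp [sub_mul, Finset.sum_sub_distrib, ite_mul]

private lemma oomd_kkt {A : ℕ} (hA : 0 < A) {η : ℝ} (hη : 0 < η) (β c x : Fin A → ℝ)
    (hc : ∀ a, 0 < c a) (hx : ∀ a, 0 < x a) (hxs : ∑ a, x a = 1)
    (hmin : ∀ y : Fin A → ℝ, (∀ a, 0 < y a) → ∑ a, y a = 1 →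
      (∑ a, x a * (-(β a))) + (1/η) * ∑ a, (Real.log (c a / x a) + x a / c a - 1) ≤
      (∑ a, y a * (-(β a))) + (1/η) * ∑ a, (Real.log (c a / y a) + y a / c a - 1)) :
    ∃ lam : ℝ, ∀ a, 1 / x a = 1 / c a - η * (β a + lam) := by
  have hphi : ∀ i j : Fin A, β i + 1/(η * x i) - 1/(η * c i)
      = β j + 1/(η * x j) - 1/(η * c j) := by
    intro i j
    rcases eq_or_ne i j with rfl | hij
    · rfl
    set d : Fin A → ℝ := fun a => (if a = i then (1:ℝ) else 0) - (if a = j then 1 else 0) with hd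
    have hdsum : ∑ a, d a = 0 := by
      simp [hd, Finset.sum_sub_distrib]
    set g : ℝ → ℝ := fun t =>
      (∑ a, (x a + t * d a) * (-(β a))) +
        (1/η) * ∑ a, (Real.log (c a / (x a + t * d a)) + (x a + t * d a) / c a - 1) with hg
    have hlin : ∀ a : Fin A, HasDerivAt (fun t : ℝ => x a + t * d a) (d a) 0 := by
      intro a
      simpa using ((hasDerivAt_id (0:ℝ)).mul_const (d a)).const_add (x a)
    have hloc : IsLocalMin g 0 := by
      have hδ : 0 < min (x i) (x j) := lt_min (hx i) (hx j)
      rw [IsLocalMin, IsMinFilter]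
      rw [Metric.eventually_nhds_iff]
      refine ⟨min (x i) (x j), hδ, ?_⟩
      intro t ht
      rw [Real.dist_eq, sub_zero] at ht
      have hy : ∀ a, 0 < x a + t * d a := by
        intro a
        have h1 : |t * d a| ≤ |t| := by
          have : |d a| ≤ 1 := by
            rcases eq_or_ne a i with rfl | hai
            · simp [hd, hij]
            rcases eq_or_ne a j with rfl | haj
            · simp [hd, hij.symm, hai]
            · simp [hd, hai, haj]
          rw [abs_mul]
          nlinarith [abs_nonneg t]
        have h2 : |t| < x a ∨ t * d a = 0 := by
          rcases eq_or_ne a i with rfl | hai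
          · exact Or.inl (lt_of_lt_of_le ht (min_le_left _ _))
          rcases eq_or_ne a j with rfl | haj
          · exact Or.inl (lt_of_lt_of_le ht (min_le_right _ _))
          · right; simp [hd, hai, haj]
        rcases h2 with h2 | h2
        · have := abs_lt.mp (lt_of_le_of_lt h1 h2)
          linarith
        · rw [h2]; simpa using hx a
      have hys : ∑ a, (x a + t * d a) = 1 := by
        rw [Finset.sum_add_distrib, hxs, ← Finset.mul_sum, hdsum]; ring
      have := hmin (fun a => x a + t * d a) hy hys
      simpa [hg] using this
    have hder2 : ∀ a : Fin A, HasDerivAt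
        (fun t => Real.log (c a / (x a + t * d a)) + (x a + t * d a) / c a - 1)
        (-(d a / x a) + d a / c a) 0 := by
      intro a
      have hxne : x a + 0 * d a ≠ 0 := by simpa using (hx a).ne'
      have hq : HasDerivAt (fun t => c a / (x a + t * d a))
          ((0 * (x a + 0 * d a) - c a * d a) / (x a + 0 * d a) ^ 2) 0 :=
        (hasDerivAt_const (0:ℝ) (c a)).div (hlin a) hxne
      have hne : c a / (x a + 0 * d a) ≠ 0 := by
        simp only [zero_mul, add_zero]
        exact div_ne_zero (hc a).ne' (hx a).ne'
      have hlog := hq.log hne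
      have hlog' : HasDerivAt (fun t => Real.log (c a / (x a + t * d a))) (-(d a / x a)) 0 := by
        convert hlog using 1
        have hx' := (hx a).ne'
        have hc' := (hc a).ne'
        field_simp
        simp only [mul_zero, add_zero, zero_mul, zero_sub, mul_neg]
        rw [neg_div, mul_div_cancel_left₀ _ hx']
      have hfr : HasDerivAt (fun t => (x a + t * d a) / c a) (d a / c a) 0 :=
        (hlin a).div_const _
      simpa using (hlog'.add hfr).sub_const 1
    have hderiv : HasDerivAt g
        ((∑ a, d a * (-(β a))) + (1/η) * ∑ a, (-(d a / x a) + d a / c a)) 0 := by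
      have h1 : HasDerivAt (fun t => ∑ a, (x a + t * d a) * (-(β a)))
          (∑ a, d a * (-(β a))) 0 :=
        HasDerivAt.fun_sum fun a _ => (hlin a).mul_const _
      have h2 : HasDerivAt
          (fun t => ∑ a, (Real.log (c a / (x a + t * d a)) + (x a + t * d a) / c a - 1))
          (∑ a, (-(d a / x a) + d a / c a)) 0 :=
        HasDerivAt.fun_sum fun a _ => hder2 a
      exact h1.add (h2.const_mul _)
    have hG : (∑ a, d a * (-(β a))) + (1/η) * ∑ a, (-(d a / x a) + d a / c a) = 0 := by
      rw [← hderiv.deriv]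
      exact hloc.deriv_eq_zero
    have e1 : ∑ a, d a * (-(β a)) = -(β i) - -(β j) := oomd_sum_pert i j _
    have e2 : ∑ a, (-(d a / x a) + d a / c a)
        = (-(1/ x i) + 1/ c i) - (-(1/ x j) + 1/ c j) := by
      have : ∀ a, -(d a / x a) + d a / c a = d a * (-(1 / x a) + 1 / c a) := by
        intro a; ring
      rw [Finset.sum_congr rfl fun a _ => this a]
      exact oomd_sum_pert i j _
    rw [e1, e2] at hG
    linear_combination -hG
  refine ⟨-(β ⟨0, hA⟩ + 1/(η * x ⟨0, hA⟩) - 1/(η * c ⟨0, hA⟩)), ?_⟩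
  intro a
  have h := hphi a ⟨0, hA⟩
  have hinv : η * η⁻¹ = 1 := mul_inv_cancel₀ hη.ne'
  linear_combination η * h + ((c a)⁻¹ - (x a)⁻¹) * hinv

set_option maxHeartbeats 2000000 in
private lemma oomd_step_stab {A : ℕ} (hA : 0 < A) (η B : ℝ) (hη : 0 < η) (hB : 0 < B)
    (hηB : η * B ≤ 1/100)
    (β c x : Fin A → ℝ) (hβ : ∀ a, 0 ≤ β a) (hc : ∀ a, 0 < c a) (hcs : ∑ a, c a = 1)
    (hx : ∀ a, 0 < x a) (hxs : ∑ a, x a = 1) (hcβ : ∑ a, c a * β a ≤ B)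
    (lam : ℝ) (hkkt : ∀ a, 1 / x a = 1 / c a - η * (β a + lam)) :
    ∀ a, (1 - 2*(η*B)) * c a ≤ x a ∧ x a ≤ (1 + 2*(η*B)) * c a := by
  have hηB0 : 0 ≤ η * B := by positivity
  have hD : ∀ a, x a * (1 - η * c a * (β a + lam)) = c a := by
    intro a
    have h := hkkt a
    have hxa := (hx a).ne'
    have hca := (hc a).ne'
    field_simp at h
    linear_combination -h
  obtain ⟨S, hSdef⟩ : ∃ S : ℝ, ∑ a, x a * c a = S := ⟨_, rfl⟩
  obtain ⟨T, hTdef⟩ : ∃ T : ℝ, ∑ a, β a * (x a * c a) = T := ⟨_, rfl⟩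
  have hS : 0 < S := hSdef ▸ Finset.sum_pos (fun a _ => mul_pos (hx a) (hc a)) ⟨⟨0, hA⟩, mem_univ _⟩
  have hT : 0 ≤ T := hTdef ▸ Finset.sum_nonneg fun a _ => mul_nonneg (hβ a) (mul_pos (hx a) (hc a)).le
  have hlamS : T + lam * S = 0 := by
    have h1 : ∑ a, (c a - x a) = 0 := by
      rw [Finset.sum_sub_distrib, hcs, hxs]; ring
    have h2 : ∑ a, (c a - x a) = ∑ a, (-η * ((β a + lam) * (x a * c a))) := by
      refine Finset.sum_congr rfl fun a _ => ?_
      linear_combination -(hD a)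
    have h3 : ∑ a, (-η * ((β a + lam) * (x a * c a))) = -η * (T + lam * S) := by
      rw [← Finset.mul_sum]
      congr 1
      calc ∑ a, ((β a + lam) * (x a * c a))
          = (∑ a, β a * (x a * c a)) + ∑ a, lam * (x a * c a) := by
            rw [← Finset.sum_add_distrib]
            exact Finset.sum_congr rfl fun a _ => by ring
        _ = T + lam * S := by rw [← Finset.mul_sum, hTdef, hSdef]
    have h4 : -η * (T + lam * S) = 0 := by rw [← h3, ← h2, h1]
    rcases mul_eq_zero.mp h4 with h | h
    · exact absurd h (by simpa using hη.ne')
    · exact h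
  have hlam : lam ≤ 0 := by
    by_contra hcon
    push_neg at hcon
    nlinarith [mul_pos hcon hS]
  have hcb : ∀ a, c a * β a ≤ B := by
    intro a
    refine le_trans ?_ hcβ
    exact Finset.single_le_sum (fun i _ => mul_nonneg (hc i).le (hβ i)) (mem_univ a)
  -- upper bound
  have hub : ∀ a, x a ≤ (1 + 2*(η*B)) * c a := by
    intro a
    have h1 : 1 - η * B ≤ 1 - η * c a * (β a + lam) := by
      have e1 : η * (c a * β a) ≤ η * B := mul_le_mul_of_nonneg_left (hcb a) hη.le
      nlinarith [mul_nonneg (mul_nonneg hη.le (hc a).le) (neg_nonneg.mpr hlam)]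
    have h2 : x a * (1 - η * B) ≤ c a := by
      calc x a * (1 - η * B) ≤ x a * (1 - η * c a * (β a + lam)) :=
            mul_le_mul_of_nonneg_left h1 (hx a).le
        _ = c a := hD a
    have e1 : 0 ≤ x a * (1/100 - η*B) := mul_nonneg (hx a).le (by linarith)
    have hx2 : x a ≤ 2 * c a := by linarith [h2, e1, (hc a).le]
    have e2 : (η*B) * x a ≤ (η*B) * (2 * c a) := mul_le_mul_of_nonneg_left hx2 hηB0
    nlinarith [h2, e2]
  -- max coordinate
  obtain ⟨am, -, hM⟩ := Finset.exists_max_image Finset.univ c ⟨⟨0, hA⟩, mem_univ _⟩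
  have hM' : ∀ a, c a ≤ c am := fun a => hM a (mem_univ a)
  have hM0 : 0 < c am := hc am
  have hL0 : 0 ≤ -lam := neg_nonneg.mpr hlam
  have hU0 : 0 ≤ η * (-lam) * c am := mul_nonneg (mul_nonneg hη.le hL0) hM0.le
  have hXpos : (0:ℝ) ≤ 1 + η * (-lam) * c am := by linarith
  -- key quantitative bound on the multiplier: U := η * (-lam) * c am ≤ 2 η B
  have hu : η * (-lam) * c am ≤ 2 * (η * B) := by
    have key1 : (-lam) * S = T := by linarith [hlamS]
    have key2 : T ≤ (1 + 2*(η*B)) * c am * B := by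
      have t1 : T ≤ ∑ a, β a * (((1 + 2*(η*B)) * c a) * c a) := by
        rw [← hTdef]
        refine Finset.sum_le_sum fun a _ => ?_
        exact mul_le_mul_of_nonneg_left
          (mul_le_mul_of_nonneg_right (hub a) (hc a).le) (hβ a)
      have t2 : ∑ a, β a * (((1 + 2*(η*B)) * c a) * c a)
          ≤ ∑ a, (1 + 2*(η*B)) * c am * (c a * β a) := by
        refine Finset.sum_le_sum fun a _ => ?_
        have w1 : (β a * c a) * c a ≤ (β a * c a) * c am :=
          mul_le_mul_of_nonneg_left (hM' a) (mul_nonneg (hβ a) (hc a).le)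
        have w2 := mul_le_mul_of_nonneg_left w1 (show (0:ℝ) ≤ 1 + 2*(η*B) by linarith)
        nlinarith [w2]
      have t3 : ∑ a, (1 + 2*(η*B)) * c am * (c a * β a)
          = (1 + 2*(η*B)) * c am * ∑ a, c a * β a := by rw [Finset.mul_sum]
      have t4 : (1 + 2*(η*B)) * c am * ∑ a, c a * β a ≤ (1 + 2*(η*B)) * c am * B := by
        have : (0:ℝ) ≤ (1 + 2*(η*B)) * c am := by positivity
        exact mul_le_mul_of_nonneg_left hcβ this
      calc T ≤ _ := t1
        _ ≤ _ := t2
        _ = _ := t3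
        _ ≤ _ := t4
    have key3 : c am * c am ≤ S * (1 + η * (-lam) * c am) := by
      have d1 : 1 - η * c am * (β am + lam) ≤ 1 + η * (-lam) * c am := by
        nlinarith [mul_nonneg (mul_nonneg hη.le hM0.le) (hβ am)]
      have d3 : c am ≤ x am * (1 + η * (-lam) * c am) := by
        calc c am = x am * (1 - η * c am * (β am + lam)) := (hD am).symm
          _ ≤ x am * (1 + η * (-lam) * c am) := mul_le_mul_of_nonneg_left d1 (hx am).le
      have d4 : x am * c am ≤ S := by
        rw [← hSdef]
        exact Finset.single_le_sum (fun i _ => (mul_pos (hx i) (hc i)).le) (mem_univ am)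
      have d5 := mul_le_mul_of_nonneg_right d3 hM0.le
      have d6 := mul_le_mul_of_nonneg_right d4 hXpos
      nlinarith [d5, d6]
    have key1' : (-lam) * (S * (1 + η * (-lam) * c am)) = T * (1 + η * (-lam) * c am) := by
      linear_combination (-(1 + η * (-lam) * c am)) * hlamS
    have key4 : (-lam) * (c am * c am) ≤ (1 + 2*(η*B)) * c am * B * (1 + η * (-lam) * c am) := by
      calc (-lam) * (c am * c am) ≤ (-lam) * (S * (1 + η * (-lam) * c am)) :=
            mul_le_mul_of_nonneg_left key3 hL0
        _ = T * (1 + η * (-lam) * c am) := key1'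
        _ ≤ (1 + 2*(η*B)) * c am * B * (1 + η * (-lam) * c am) :=
            mul_le_mul_of_nonneg_right key2 hXpos
    have key5 : η * (-lam) * c am ≤ (1 + 2*(η*B)) * (η*B) * (1 + η * (-lam) * c am) := by
      have h5 := mul_le_mul_of_nonneg_left key4 hη.le
      have h6 : (η * (-lam) * c am) * c am
          ≤ ((1 + 2*(η*B)) * (η*B) * (1 + η * (-lam) * c am)) * c am := by nlinarith [h5]
      exact le_of_mul_le_mul_right h6 hM0
    have p1 : (η*B) * (η * (-lam) * c am) ≤ (1/100) * (η * (-lam) * c am) :=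
      mul_le_mul_of_nonneg_right hηB hU0
    have p2 := mul_le_mul_of_nonneg_left p1 hηB0
    have p3 : (η*B)*(η*B) ≤ (1/100)*(η*B) := mul_le_mul_of_nonneg_right hηB hηB0
    linarith [key5, p1, p2, p3, hηB0, hU0]
  -- lower bound
  intro a
  refine ⟨?_, hub a⟩
  have d1 : 1 - η * c a * (β a + lam) ≤ 1 + η * (-lam) * c am := by
    have h1 : η * c a * (-lam) ≤ η * c am * (-lam) :=
      mul_le_mul_of_nonneg_right (mul_le_mul_of_nonneg_left (hM' a) hη.le) hL0
    nlinarith [mul_nonneg (mul_nonneg hη.le (hc a).le) (hβ a)]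
  have d2 : c a ≤ x a * (1 + η * (-lam) * c am) := by
    calc c a = x a * (1 - η * c a * (β a + lam)) := (hD a).symm
      _ ≤ x a * (1 + η * (-lam) * c am) := mul_le_mul_of_nonneg_left d1 (hx a).le
  have q1 : c a ≤ x a * (1 + 2*(η*B)) := by
    have h7 : x a * (η * (-lam) * c am) ≤ x a * (2*(η*B)) :=
      mul_le_mul_of_nonneg_left hu (hx a).le
    linarith [d2, h7]
  have q2 := mul_le_mul_of_nonneg_left q1 (show (0:ℝ) ≤ 1 - 2*(η*B) by linarith)
  linarith [q2, (hx a).le, mul_nonneg (mul_nonneg hηB0 hηB0) (hx a).le]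


set_option maxHeartbeats 2000000 in
/-- Stability of optimistic online mirror descent with a log-barrier regularizer
(Lemma A.3 / Eq. (stability)): consecutive iterates are multiplicatively
`120 η C`-close. -/
theorem oomd_log_barrier_stability
    (A K : ℕ) (hA : 1 ≤ A) (hK : 1 ≤ K)
    (η C : ℝ) (hη : 0 < η) (hC : 0 < C) (hηC : η ≤ 1 / (270 * C))
    (D : (Fin A → ℝ) → (Fin A → ℝ) → ℝ)
    (hD : ∀ x x', D x x' =
      (1 / η) * ∑ a, (Real.log (x' a / x a) + x a / x' a - 1))
    (π πp : ℕ → Fin A → ℝ) (β : ℕ → Fin A → ℝ)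
    (hπ1 : ∀ a, π 1 a = 1 / (A : ℝ)) (hπp1 : ∀ a, πp 1 a = 1 / (A : ℝ))
    (hβ0 : ∀ a, β 0 a = 0)
    (hβnonneg : ∀ k ∈ Icc 1 K, ∀ a, 0 ≤ β k a)
    (hβbound : ∀ k ∈ Icc 1 K, ∑ a, π k a * β k a ≤ C)
    (hπpΔ : ∀ k ∈ Icc 1 K, (∀ a, 0 < πp (k + 1) a) ∧ ∑ a, πp (k + 1) a = 1)
    (hπΔ : ∀ k ∈ Icc 1 K, (∀ a, 0 < π (k + 1) a) ∧ ∑ a, π (k + 1) a = 1)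
    (hπpmin : ∀ k ∈ Icc 1 K, ∀ x : Fin A → ℝ, (∀ a, 0 < x a) → ∑ a, x a = 1 →
      (∑ a, πp (k + 1) a * (-(β k a))) + D (πp (k + 1)) (πp k) ≤
        (∑ a, x a * (-(β k a))) + D x (πp k))
    (hπmin : ∀ k ∈ Icc 1 K, ∀ x : Fin A → ℝ, (∀ a, 0 < x a) → ∑ a, x a = 1 →
      (∑ a, π (k + 1) a * (-(β k a))) + D (π (k + 1)) (πp (k + 1)) ≤
        (∑ a, x a * (-(β k a))) + D x (πp (k + 1))) :
    ∀ k ∈ Icc 1 K, ∀ a, |π (k + 1) a - π k a| ≤ 120 * η * C * π k a := by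
  have hA' : 0 < A := hA
  have hA0 : (0:ℝ) < A := by exact_mod_cast hA
  have hε0 : 0 < η * C := mul_pos hη hC
  have hε : η * C ≤ 1/270 := by
    have h1 := mul_le_mul_of_nonneg_right hηC hC.le
    have h2 : 1 / (270 * C) * C = 1/270 := by field_simp
    linarith [h1, h2.le]
  -- positivity and normalization of the iterates
  have hq : ∀ k, 1 ≤ k → k ≤ K + 1 → (∀ a, 0 < πp k a) ∧ ∑ a, πp k a = 1 := by
    intro k h1 h2
    rcases Nat.lt_or_ge k 2 with h | h
    · have hk1 : k = 1 := by omega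
      subst hk1
      constructor
      · intro a; rw [hπp1]; positivity
      · rw [Finset.sum_congr rfl fun a _ => hπp1 a]
        simp [Finset.card_univ]
        field_simp
    · obtain ⟨m, rfl⟩ : ∃ m, k = m + 1 := ⟨k - 1, by omega⟩
      exact hπpΔ m (mem_Icc.mpr ⟨by omega, by omega⟩)
  have hp : ∀ k, 1 ≤ k → k ≤ K + 1 → (∀ a, 0 < π k a) ∧ ∑ a, π k a = 1 := by
    intro k h1 h2
    rcases Nat.lt_or_ge k 2 with h | h
    · have hk1 : k = 1 := by omega
      subst hk1
      constructor
      · intro a; rw [hπ1]; positivity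
      · rw [Finset.sum_congr rfl fun a _ => hπ1 a]
        simp [Finset.card_univ]
        field_simp
    · obtain ⟨m, rfl⟩ : ∃ m, k = m + 1 := ⟨k - 1, by omega⟩
      exact hπΔ m (mem_Icc.mpr ⟨by omega, by omega⟩)
  have hεq : (η*C)*(η*C) ≤ (1/270)*(η*C) := mul_le_mul_of_nonneg_right hε hε0.le
  have hεc : (η*C)*((η*C)*(η*C)) ≤ (1/270)*((1/270)*(η*C)) := by nlinarith [hεq, hε0, hε]
  -- one round of the update: stability of both half-steps
  have hstep : ∀ k, 1 ≤ k → k ≤ K → (∀ a, πp k a ≤ (1 + 10*(η*C)) * π k a) →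
      ∀ a, ((1 - 2*(η*(2*C))) * πp k a ≤ πp (k+1) a ∧
              πp (k+1) a ≤ (1 + 2*(η*(2*C))) * πp k a) ∧
           ((1 - 2*(η*(2*C))) * πp (k+1) a ≤ π (k+1) a ∧
              π (k+1) a ≤ (1 + 2*(η*(2*C))) * πp (k+1) a) := by
    intro k hk1 hkK hJ
    have hkm : k ∈ Icc 1 K := mem_Icc.mpr ⟨hk1, hkK⟩
    obtain ⟨hqk, hqks⟩ := hq k hk1 (by omega)
    obtain ⟨hqk1, hqk1s⟩ := hq (k+1) (by omega) (by omega)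
    obtain ⟨hpk1, hpk1s⟩ := hp (k+1) (by omega) (by omega)
    have hβk := hβnonneg k hkm
    have h2C0 : (0:ℝ) < 2*C := by linarith
    have hη2C : η * (2*C) ≤ 1/100 := by nlinarith [hε]
    -- bound on the first reference point
    have hb1' : ∑ a, πp k a * β k a ≤ (1 + 10*(η*C)) * C := by
      have t : ∀ a ∈ Finset.univ, πp k a * β k a ≤ (1 + 10*(η*C)) * (π k a * β k a) := by
        intro a _
        have := mul_le_mul_of_nonneg_right (hJ a) (hβk a)
        nlinarith [this]
      calc ∑ a, πp k a * β k a ≤ ∑ a, (1 + 10*(η*C)) * (π k a * β k a) :=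
            Finset.sum_le_sum t
        _ = (1 + 10*(η*C)) * ∑ a, π k a * β k a := by rw [Finset.mul_sum]
        _ ≤ (1 + 10*(η*C)) * C :=
            mul_le_mul_of_nonneg_left (hβbound k hkm) (by positivity)
    have hb1 : ∑ a, πp k a * β k a ≤ 2*C := by nlinarith [hb1', hε, hε0]
    -- first half-step
    have hmin1 : ∀ y : Fin A → ℝ, (∀ a, 0 < y a) → ∑ a, y a = 1 →
        (∑ a, πp (k+1) a * (-(β k a))) +
          (1/η) * ∑ a, (Real.log (πp k a / πp (k+1) a) + πp (k+1) a / πp k a - 1) ≤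
        (∑ a, y a * (-(β k a))) +
          (1/η) * ∑ a, (Real.log (πp k a / y a) + y a / πp k a - 1) := by
      intro y hy hys
      have h := hπpmin k hkm y hy hys
      rw [hD (πp (k+1)) (πp k), hD y (πp k)] at h
      exact h
    obtain ⟨lam1, hkkt1⟩ := oomd_kkt hA' hη (β k) (πp k) (πp (k+1)) hqk hqk1 hqk1s hmin1
    have hstep1 := oomd_step_stab hA' η (2*C) hη h2C0 hη2C (β k) (πp k) (πp (k+1))
      hβk hqk hqks hqk1 hqk1s hb1 lam1 hkkt1
    -- bound on the second reference point
    have hb2 : ∑ a, πp (k+1) a * β k a ≤ 2*C := by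
      have t : ∀ a ∈ Finset.univ, πp (k+1) a * β k a
          ≤ (1 + 2*(η*(2*C))) * (πp k a * β k a) := by
        intro a _
        have := mul_le_mul_of_nonneg_right (hstep1 a).2 (hβk a)
        nlinarith [this]
      have c1 : ∑ a, πp (k+1) a * β k a
          ≤ (1 + 2*(η*(2*C))) * ∑ a, πp k a * β k a := by
        calc ∑ a, πp (k+1) a * β k a
            ≤ ∑ a, (1 + 2*(η*(2*C))) * (πp k a * β k a) := Finset.sum_le_sum t
          _ = _ := by rw [Finset.mul_sum]
      have c2 : (1 + 2*(η*(2*C))) * ∑ a, πp k a * β k a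
          ≤ (1 + 2*(η*(2*C))) * ((1 + 10*(η*C)) * C) :=
        mul_le_mul_of_nonneg_left hb1' (by positivity)
      have c3 : (1 + 2*(η*(2*C))) * ((1 + 10*(η*C)) * C) ≤ 2*C := by
        have f1 := mul_le_mul_of_nonneg_left hε hC.le
        have f2 := mul_le_mul_of_nonneg_left hεq hC.le
        linarith [f1, f2, hC.le]
      linarith
    -- second half-step
    have hmin2 : ∀ y : Fin A → ℝ, (∀ a, 0 < y a) → ∑ a, y a = 1 →
        (∑ a, π (k+1) a * (-(β k a))) +
          (1/η) * ∑ a, (Real.log (πp (k+1) a / π (k+1) a) + π (k+1) a / πp (k+1) a - 1) ≤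
        (∑ a, y a * (-(β k a))) +
          (1/η) * ∑ a, (Real.log (πp (k+1) a / y a) + y a / πp (k+1) a - 1) := by
      intro y hy hys
      have h := hπmin k hkm y hy hys
      rw [hD (π (k+1)) (πp (k+1)), hD y (πp (k+1))] at h
      exact h
    obtain ⟨lam2, hkkt2⟩ := oomd_kkt hA' hη (β k) (πp (k+1)) (π (k+1)) hqk1 hpk1 hpk1s hmin2
    have hstep2 := oomd_step_stab hA' η (2*C) hη h2C0 hη2C (β k) (πp (k+1)) (π (k+1))
      hβk hqk1 hqk1s hpk1 hpk1s hb2 lam2 hkkt2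
    intro a
    exact ⟨hstep1 a, hstep2 a⟩
  -- auxiliary smallness facts
  -- the invariant J : πp k and π k are multiplicatively close
  have J : ∀ k, 1 ≤ k → k ≤ K + 1 → ∀ a,
      πp k a ≤ (1 + 10*(η*C)) * π k a ∧ π k a ≤ (1 + 10*(η*C)) * πp k a := by
    intro k hk1
    induction k, hk1 using Nat.le_induction with
    | base =>
      intro _ a
      rw [hπ1, hπp1]
      have h1 : (0:ℝ) ≤ 1/(A:ℝ) := by positivity
      constructor <;> nlinarith [hε0, h1]
    | succ k hk ih =>
      intro hk2 a
      have hkK : k ≤ K := by omega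
      have ihk := ih (by omega)
      have hs := hstep k hk hkK (fun a => (ihk a).1)
      obtain ⟨⟨l1, u1⟩, ⟨l2, u2⟩⟩ := hs a
      have hq1pos := ((hq (k+1) (by omega) (by omega)).1) a
      have hp1pos := ((hp (k+1) (by omega) (by omega)).1) a
      constructor
      · -- πp (k+1) ≤ (1+10ε) π (k+1)
        have w := mul_le_mul_of_nonneg_left l2 (show (0:ℝ) ≤ 1 + 10*(η*C) by positivity)
        have e3 : πp (k+1) a * ((η*C)*(η*C)) ≤ πp (k+1) a * ((1/270)*(η*C)) :=
          mul_le_mul_of_nonneg_left hεq hq1pos.le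
        have e4 : 0 ≤ πp (k+1) a * (η*C) := mul_nonneg hq1pos.le hε0.le
        linarith [w, e3, e4]
      · -- π (k+1) ≤ (1+10ε) πp (k+1)
        have e4 : 0 ≤ πp (k+1) a * (η*C) := mul_nonneg hq1pos.le hε0.le
        linarith [u2, e4]
  -- conclusion
  intro k hkm a
  obtain ⟨hk1, hkK⟩ := mem_Icc.mp hkm
  have Jk := J k hk1 (by omega) a
  have hs := hstep k hk1 hkK (fun a => (J k hk1 (by omega) a).1)
  obtain ⟨⟨l1, u1⟩, ⟨l2, u2⟩⟩ := hs a
  have hqkpos := ((hq k hk1 (by omega)).1) a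
  have hqk1pos := ((hq (k+1) (by omega) (by omega)).1) a
  have hpkpos := ((hp k hk1 (by omega)).1) a
  have hpk1pos := ((hp (k+1) (by omega) (by omega)).1) a
  have pe2 : π k a * ((η*C)*(η*C)) ≤ π k a * ((1/270)*(η*C)) :=
    mul_le_mul_of_nonneg_left hεq hpkpos.le
  have pe3 : π k a * ((η*C)*((η*C)*(η*C))) ≤ π k a * ((1/270)*((1/270)*(η*C))) :=
    mul_le_mul_of_nonneg_left hεc hpkpos.le
  have pe0 : 0 ≤ π k a * (η*C) := mul_nonneg hpkpos.le hε0.le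
  have pe1 : 0 ≤ π k a * ((η*C)*(η*C)) := mul_nonneg hpkpos.le (by positivity)
  -- upper bound : π (k+1) ≤ (1+4ε)^2 (1+10ε) π k
  have m1 := mul_le_mul_of_nonneg_left u1 (show (0:ℝ) ≤ 1 + 2*(η*(2*C)) by positivity)
  have m2 := mul_le_mul_of_nonneg_left (Jk.1)
    (show (0:ℝ) ≤ (1 + 2*(η*(2*C))) * (1 + 2*(η*(2*C))) by positivity)
  have hupper : π (k+1) a - π k a ≤ 120 * η * C * π k a := by
    linarith [u2, m1, m2, pe2, pe3, pe0, pe1]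
  -- lower bound
  have qe2 : πp k a * ((η*C)*(η*C)) ≤ πp k a * ((1/270)*(η*C)) :=
    mul_le_mul_of_nonneg_left hεq hqkpos.le
  have n1 : (1 - 10*(η*C)) * π k a ≤ πp k a := by
    have w := mul_le_mul_of_nonneg_left (Jk.2) (show (0:ℝ) ≤ 1 - 10*(η*C) by nlinarith [hε])
    have qe1 : 0 ≤ πp k a * ((η*C)*(η*C)) := mul_nonneg hqkpos.le (by positivity)
    linarith [w, qe1]
  have m3 := mul_le_mul_of_nonneg_left l1 (show (0:ℝ) ≤ 1 - 2*(η*(2*C)) by nlinarith [hε])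
  have m4 := mul_le_mul_of_nonneg_left n1
    (show (0:ℝ) ≤ (1 - 2*(η*(2*C))) * (1 - 2*(η*(2*C))) by nlinarith [hε])
  have hlower : π k a - π (k+1) a ≤ 120 * η * C * π k a := by
    linarith [l2, m3, m4, pe2, pe3, pe0, pe1]
  exact abs_le.mpr ⟨by linarith, by linarith⟩
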